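/- Full error propagation: let c, c̃ : Fin N → [0,1] with max_x |c̃(x) - c(x)| ≤ 2ε, set γ = (1/N)Σ c(x)², γ̃ = (1/N)Σ c̃(x)², and suppose 0 < ε ≤ γ/4 and γ ≤ 1. Then the normalized states ψ = (1/√(Nγ))Σ c(x)e_x and ψ̃ = (1/√(Nγ̃))Σ c̃(x)e_x in ℂ^N satisfy ‖ψ̃ - ψ‖ ≤ 3ε/γ. -/

import Mathlib

set_option maxHeartbeats 1000000 in
theorem full_error_propagation (N : ℕ) (hN : 0 < N)
    (c ct : Fin N → ℝ) (ε : ℝ)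
    (hc : ∀ x, c x ∈ Set.Icc (0 : ℝ) 1) (hct : ∀ x, ct x ∈ Set.Icc (0 : ℝ) 1)
    (hclose : ∀ x, |ct x - c x| ≤ ε)
    (γ γt : ℝ)
    (hγdef : γ = (1 / (N : ℝ)) * ∑ x, (c x) ^ 2)
    (hγtdef : γt = (1 / (N : ℝ)) * ∑ x, (ct x) ^ 2)
    (hε : 0 < ε) (hεγ : ε ≤ γ / 4) (hγ1 : γ ≤ 1) (hγ : 0 < γ) :
    let ψ : EuclideanSpace ℂ (Fin N) := WithLp.toLp 2 (fun x => (1 / Real.sqrt (N * γ) : ℂ) * (c x : ℂ))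
    let ψt : EuclideanSpace ℂ (Fin N) := WithLp.toLp 2 (fun x => (1 / Real.sqrt (N * γt) : ℂ) * (ct x : ℂ))
    ‖ψt - ψ‖ ≤ 3 * ε / γ := by
  intro ψ ψt
  have hNR : (0:ℝ) < N := Nat.cast_pos.mpr hN
  have hNne : (N:ℝ) ≠ 0 := ne_of_gt hNR
  have hsum_c : ∑ x, (c x)^2 = N * γ := by rw [hγdef]; field_simp
  have hsum_ct : ∑ x, (ct x)^2 = N * γt := by rw [hγtdef]; field_simp
  have hγtnn : 0 ≤ γt := by
    rw [hγtdef]; positivity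
  have hdiff : |γt - γ| ≤ 2 * ε := by
    have key : |(∑ x, (ct x)^2) - ∑ x, (c x)^2| ≤ N * (2*ε) := by
      rw [← Finset.sum_sub_distrib]
      calc |∑ x, ((ct x)^2 - (c x)^2)| ≤ ∑ x, |(ct x)^2 - (c x)^2| :=
            Finset.abs_sum_le_sum_abs _ _
        _ ≤ ∑ _x : Fin N, 2*ε := by
            apply Finset.sum_le_sum
            intro x _
            have h1 := (hc x).1; have h2 := (hc x).2
            have h3 := (hct x).1; have h4 := (hct x).2
            have h5 := abs_le.mp (hclose x)
            rw [abs_le]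
            constructor <;> nlinarith
        _ = N * (2*ε) := by simp [Finset.sum_const, mul_comm]
    rw [hsum_c, hsum_ct] at key
    have h6 : |(N:ℝ) * γt - N * γ| = N * |γt - γ| := by
      rw [← mul_sub, abs_mul, abs_of_pos hNR]
    rw [h6] at key
    exact (mul_le_mul_iff_right₀ hNR).mp key
  have hγt : γ/2 ≤ γt := by
    have := abs_le.mp hdiff; linarith
  have hγtpos : 0 < γt := by linarith
  set t := Real.sqrt (N*γ) with htdef
  set s := Real.sqrt (N*γt) with hsdef
  have ht2 : t^2 = N*γ := Real.sq_sqrt (by positivity)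
  have hs2 : s^2 = N*γt := Real.sq_sqrt (by positivity)
  have htpos : 0 < t := Real.sqrt_pos.mpr (by positivity)
  have hspos : 0 < s := Real.sqrt_pos.mpr (by positivity)
  set v : EuclideanSpace ℂ (Fin N) := WithLp.toLp 2 (fun x => (c x : ℂ)) with hv
  set w : EuclideanSpace ℂ (Fin N) := WithLp.toLp 2 (fun x => (ct x : ℂ)) with hw
  have hsplit : ψt - ψ = ((1/t : ℝ):ℂ) • (w - v) + (((1/s - 1/t : ℝ)):ℂ) • w := by
    ext x
    show (1 / (Real.sqrt (N*γt) : ℂ)) * (ct x : ℂ) - (1 / (Real.sqrt (N*γ) : ℂ)) * (c x : ℂ)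
        = ((1/t : ℝ):ℂ) * ((ct x : ℂ) - (c x : ℂ)) + (((1/s - 1/t : ℝ)):ℂ) * (ct x : ℂ)
    rw [htdef, hsdef]
    push_cast
    ring
  have hnorm_wv : ‖w - v‖ ≤ Real.sqrt N * ε := by
    rw [EuclideanSpace.norm_eq]
    have hb : ∀ x : Fin N, ‖(w - v) x‖^2 ≤ ε^2 := by
      intro x
      have : (w - v) x = ((ct x - c x : ℝ) : ℂ) := by
        simp [hv, hw, Pi.sub_apply]
      rw [this, Complex.norm_real, Real.norm_eq_abs, sq_abs]
      have := abs_le.mp (hclose x)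
      nlinarith
    calc Real.sqrt (∑ x, ‖(w-v) x‖^2)
        ≤ Real.sqrt (∑ _x : Fin N, ε^2) :=
          Real.sqrt_le_sqrt (Finset.sum_le_sum fun x _ => hb x)
      _ = Real.sqrt (N * ε^2) := by simp [Finset.sum_const, mul_comm]
      _ = Real.sqrt N * ε := by
          rw [Real.sqrt_mul hNR.le, Real.sqrt_sq hε.le]
  have hnorm_w : ‖w‖ = s := by
    have hss : ∑ x, ‖w x‖^2 = N * γt := by
      rw [← hsum_ct]
      apply Finset.sum_congr rfl
      intro x _
      have : w x = ((ct x : ℝ) : ℂ) := rfl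
      rw [this, Complex.norm_real, Real.norm_eq_abs, sq_abs]
    rw [EuclideanSpace.norm_eq, hss]
  have hmain : ‖ψt - ψ‖ ≤ (1/t) * (Real.sqrt N * ε) + |1/s - 1/t| * s := by
    rw [hsplit]
    refine (norm_add_le _ _).trans ?_
    rw [norm_smul, norm_smul, Complex.norm_real, Complex.norm_real,
      Real.norm_eq_abs, Real.norm_eq_abs, hnorm_w, abs_of_pos (by positivity : (0:ℝ) < 1/t)]
    gcongr
  have hterm1 : (1/t) * (Real.sqrt N * ε) ≤ ε / γ := by
    have hts : t = Real.sqrt N * Real.sqrt γ := by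
      rw [htdef, Real.sqrt_mul hNR.le]
    have hsg : γ ≤ Real.sqrt γ := by
      nlinarith [Real.sq_sqrt hγ.le, Real.sqrt_nonneg γ, sq_nonneg (Real.sqrt γ - 1)]
    have hsgpos : 0 < Real.sqrt γ := Real.sqrt_pos.mpr hγ
    have hNs : 0 < Real.sqrt N := Real.sqrt_pos.mpr hNR
    have : (1/t) * (Real.sqrt N * ε) = ε / Real.sqrt γ := by
      rw [hts]; field_simp
    rw [this]
    gcongr
  have hterm2 : |1/s - 1/t| * s ≤ 2 * ε / γ := by
    have hts' : |t^2 - s^2| ≤ 2 * N * ε := by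
      rw [ht2, hs2, ← mul_sub, abs_mul, abs_of_pos hNR, abs_sub_comm]
      calc (N:ℝ) * |γt - γ| ≤ N * (2*ε) := by gcongr
        _ = 2 * N * ε := by ring
    have hfact : |t - s| * (t + s) ≤ 2 * N * ε := by
      have : |t - s| * (t + s) = |t^2 - s^2| := by
        rw [← abs_of_pos (by linarith : (0:ℝ) < t + s), ← abs_mul]
        congr 1; ring
      rw [this]; exact hts'
    have hts2 : |t - s| ≤ 2 * N * ε / t := by
      rw [le_div_iff₀ htpos]
      calc |t - s| * t ≤ |t - s| * (t + s) :=
            mul_le_mul_of_nonneg_left (le_add_of_nonneg_right hspos.le) (abs_nonneg _)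
        _ ≤ 2 * N * ε := hfact
    have heq : |1/s - 1/t| * s = |t - s| / t := by
      have : (1:ℝ)/s - 1/t = (t - s)/(s*t) := by field_simp
      rw [this, abs_div, abs_of_pos (by positivity : (0:ℝ) < s*t),
        div_mul_eq_mul_div, mul_comm |t - s| s, mul_div_mul_left _ _ hspos.ne']
    rw [heq]
    calc |t - s| / t ≤ (2 * N * ε / t) / t := by gcongr
      _ = 2 * N * ε / t^2 := by rw [div_div, ← pow_two]
      _ = 2 * ε / γ := by rw [ht2]; field_simp [hNne, hγ.ne']
  calc ‖ψt - ψ‖ ≤ (1/t) * (Real.sqrt N * ε) + |1/s - 1/t| * s := hmain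
    _ ≤ ε / γ + 2 * ε / γ := add_le_add hterm1 hterm2
    _ = 3 * ε / γ := by ring
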